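/- For the matrix Frobenius algebra M_N(𝕜): for every g, b ≥ 0, every k ≥ 1, all positive integers r₁,…,r_k, and all matrices A_{j,s} ∈ M_N(𝕜) (1 ≤ j ≤ k, 1 ≤ s ≤ r_j), the open topological field theory amplitude takes the value T^{g,b}_{r₁,…,r_k}(A_{1,1},…,A_{1,r₁};…;A_{k,1},…,A_{k,r_k}) = N^b · ∏_{j=1}^k Tr(A_{j,1}⋯A_{j,r_j}), where N^b denotes the b-th power of the image of N in 𝕜. -/

import Mathlib

noncomputable section

variable (𝕜 : Type*) [CommRing 𝕜]

/-- `x_{(a,c)} := E_{ac}`, the matrix unit with a `1` in position `(a,c)`. -/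
def matX (N : ℕ) (i : Fin N × Fin N) : Matrix (Fin N) (Fin N) 𝕜 :=
  Matrix.single i.1 i.2 1

/-- `y_{(a,c)} := E_{ca}`, the dual of `x_{(a,c)}` for the trace pairing. -/
def matY (N : ℕ) (i : Fin N × Fin N) : Matrix (Fin N) (Fin N) 𝕜 :=
  Matrix.single i.2 i.1 1

/-- The central element `Ξ_bdry := Σ_i x_i y_i` of the matrix Frobenius algebra. -/
def xiBdry (N : ℕ) : Matrix (Fin N) (Fin N) 𝕜 :=
  ∑ i : Fin N × Fin N, matX 𝕜 N i * matY 𝕜 N i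

/-- The central element `Ξ_gen := Σ_{i,j} x_i x_j y_i y_j` of the matrix Frobenius
algebra (all Koszul signs equal `+1` since the algebra is in degree zero). -/
def xiGen (N : ℕ) : Matrix (Fin N) (Fin N) 𝕜 :=
  ∑ i : Fin N × Fin N, ∑ j : Fin N × Fin N,
    matX 𝕜 N i * matX 𝕜 N j * matY 𝕜 N i * matY 𝕜 N j

/-- The open topological field theory amplitude `T^{g,b}_{r₁,…,r_k}` of the matrix
Frobenius algebra `M_N(𝕜)`, evaluated on matrices `A j s` (`j < k`, `s < r j`):
`Σ_{i₁,…,i_k} Tr(x_{i_k} ⋯ x_{i_1}) ·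
  Tr(Ξ_bdry^b Ξ_gen^g y_{i₁} A_{1,1} ⋯ A_{1,r₁} ⋯ y_{i_k} A_{k,1} ⋯ A_{k,r_k})`,
the sum running over all `k`-tuples of indices in `{1,…,N}²`. -/
def otftAmplitude (N gg bb k : ℕ) (r : Fin k → ℕ)
    (A : (j : Fin k) → Fin (r j) → Matrix (Fin N) (Fin N) 𝕜) : 𝕜 :=
  ∑ i : Fin k → Fin N × Fin N,
    Matrix.trace ((List.ofFn fun j : Fin k => matX 𝕜 N (i j)).reverse.prod) *
      Matrix.trace (xiBdry 𝕜 N ^ bb * xiGen 𝕜 N ^ gg *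
        (List.ofFn fun j : Fin k =>
          matY 𝕜 N (i j) * (List.ofFn fun s : Fin (r j) => A j s).prod).prod)

/-- Dual-basis expansion: `Σ_i Tr(P x_i) y_i = P`. -/
lemma otft_M1 (N : ℕ) (P : Matrix (Fin N) (Fin N) 𝕜) :
    ∑ i : Fin N × Fin N, Matrix.trace (P * matX 𝕜 N i) • matY 𝕜 N i = P := by
  ext p q
  simp [matX, matY, Matrix.trace, Matrix.mul_apply, Matrix.single, Matrix.diag,
    Fintype.sum_prod_type, Matrix.sum_apply, Matrix.smul_apply, smul_eq_mul, mul_ite, ite_and,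
    Finset.sum_ite_eq, Finset.sum_ite_eq']

/-- `Σ_i x_i D y_i = Tr(D) • 1`. -/
lemma otft_M2 (N : ℕ) (D : Matrix (Fin N) (Fin N) 𝕜) :
    ∑ i : Fin N × Fin N, matX 𝕜 N i * D * matY 𝕜 N i = Matrix.trace D • 1 := by
  ext p q
  simp [matX, matY, Matrix.trace, Matrix.mul_apply, Matrix.single, Matrix.diag,
    Fintype.sum_prod_type, Matrix.sum_apply, Matrix.smul_apply, smul_eq_mul, mul_ite, ite_and,
    Finset.sum_ite_eq, Finset.sum_ite_eq', Matrix.one_apply, eq_comm]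

lemma otft_xiBdry_eq (N : ℕ) : xiBdry 𝕜 N = (N : 𝕜) • 1 := by
  ext p q
  simp [xiBdry, matX, matY, Matrix.mul_apply, Matrix.single,
    Fintype.sum_prod_type, Matrix.sum_apply, Matrix.smul_apply, smul_eq_mul, mul_ite, ite_and,
    Finset.sum_ite_eq, Finset.sum_ite_eq', Matrix.one_apply, eq_comm]
  split <;> simp

lemma otft_xiGen_eq (N : ℕ) : xiGen 𝕜 N = 1 := by
  ext p q
  simp [xiGen, matX, matY, Matrix.mul_apply, Matrix.single,
    Fintype.sum_prod_type, Matrix.sum_apply, Matrix.smul_apply, smul_eq_mul, mul_ite, ite_and,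
    Finset.sum_ite_eq, Finset.sum_ite_eq', Matrix.one_apply, eq_comm]

/-- Sewing of two traces along a dual pair. -/
lemma otft_L1 (N : ℕ) (P Q R : Matrix (Fin N) (Fin N) 𝕜) :
    ∑ i : Fin N × Fin N,
      Matrix.trace (P * matX 𝕜 N i) * Matrix.trace (Q * (matY 𝕜 N i * R)) =
      Matrix.trace (Q * (P * R)) := by
  conv_rhs => rw [← otft_M1 𝕜 N P]
  simp [Finset.mul_sum, Finset.sum_mul, Matrix.mul_sum, Matrix.sum_mul,
    Matrix.mul_smul, Matrix.smul_mul, mul_comm]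

/-- Sewing within a single trace. -/
lemma otft_L2 (N : ℕ) (P₁ P₂ D Q : Matrix (Fin N) (Fin N) 𝕜) :
    ∑ i : Fin N × Fin N,
      Matrix.trace (P₁ * (P₂ * (matX 𝕜 N i * (D * (matY 𝕜 N i * Q))))) =
      Matrix.trace D * Matrix.trace (P₁ * (P₂ * Q)) := by
  have h : ∑ i : Fin N × Fin N, P₁ * (P₂ * (matX 𝕜 N i * (D * (matY 𝕜 N i * Q))))
      = P₁ * (P₂ * ((Matrix.trace D • 1) * Q)) := by
    rw [← otft_M2 𝕜 N D]; simp [Matrix.mul_sum, Matrix.sum_mul, mul_assoc]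
  rw [← Matrix.trace_sum, h]
  simp [Matrix.smul_mul, Matrix.mul_smul, smul_eq_mul]

/-- The inductive "peeling" step for the amplitude computation. -/
lemma otft_peel (N : ℕ) : ∀ (m : ℕ) (C : Matrix (Fin N) (Fin N) 𝕜)
    (B : Fin (m + 1) → Matrix (Fin N) (Fin N) 𝕜),
    ∑ i : Fin m → Fin N × Fin N,
      Matrix.trace (C * (List.ofFn fun j => matX 𝕜 N (i j)).reverse.prod * B 0 *
        (List.ofFn fun j : Fin m => matY 𝕜 N (i j) * B j.succ).prod)
    = (∏ j : Fin m, Matrix.trace (B j.castSucc)) * Matrix.trace (C * B (Fin.last m)) := by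
  intro m
  induction m with
  | zero =>
    intro C B
    simp [Finset.sum_const, List.ofFn_zero]
  | succ m IH =>
    intro C B
    rw [← Equiv.sum_comp (Fin.consEquiv fun _ : Fin (m+1) => Fin N × Fin N),
      Fintype.sum_prod_type, Finset.sum_comm]
    simp only [Fin.consEquiv_apply, Fin.cons_zero, Fin.cons_succ, List.ofFn_succ,
      List.reverse_cons, List.prod_append, List.prod_cons, List.prod_nil, mul_one, one_mul,
      mul_assoc]
    have step : ∀ i' : Fin m → Fin N × Fin N,
        ∑ i0 : Fin N × Fin N,
          Matrix.trace (C * ((List.ofFn fun j => matX 𝕜 N (i' j)).reverse.prod *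
            (matX 𝕜 N i0 * (B 0 * (matY 𝕜 N i0 * ((B (0 : Fin (m+1)).succ) *
              (List.ofFn fun j : Fin m => matY 𝕜 N (i' j) * B j.succ.succ).prod))))))
        = Matrix.trace (B 0) *
          Matrix.trace (C * ((List.ofFn fun j => matX 𝕜 N (i' j)).reverse.prod *
            ((B (0 : Fin (m+1)).succ) *
              (List.ofFn fun j : Fin m => matY 𝕜 N (i' j) * B j.succ.succ).prod))) :=
      fun i' => otft_L2 𝕜 N _ _ _ _
    rw [Finset.sum_congr rfl fun i' _ => step i']
    rw [← Finset.mul_sum]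
    have IH' := IH C (fun j => B j.succ)
    simp only [mul_assoc] at IH'
    rw [IH']
    rw [Fin.prod_univ_succ (fun j : Fin (m+1) => Matrix.trace (B j.castSucc))]
    simp [Fin.succ_castSucc, Fin.succ_last, mul_assoc, -Fin.castSucc_succ]

/-- **The open topological field theory amplitudes of the matrix Frobenius algebra.**
For every `g, b ≥ 0`, every `k ≥ 1`, all positive integers `r₁, …, r_k`, and all
matrices `A_{j,s} ∈ M_N(𝕜)`, the open topological field theory amplitude takes the
value `T^{g,b}_{r₁,…,r_k}(A_{1,1},…,A_{1,r₁};…;A_{k,1},…,A_{k,r_k})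
  = N^b · ∏_{j=1}^k Tr(A_{j,1} ⋯ A_{j,r_j})`,
where `N^b` denotes the `b`-th power of the image of `N` in `𝕜`. -/
theorem otftAmplitude_matrix_eq
    (N : ℕ) (hN : 1 ≤ N) (gg bb k : ℕ) (hk : 1 ≤ k)
    (r : Fin k → ℕ) (hr : ∀ j, 1 ≤ r j)
    (A : (j : Fin k) → Fin (r j) → Matrix (Fin N) (Fin N) 𝕜) :
    otftAmplitude 𝕜 N gg bb k r A =
      (N : 𝕜) ^ bb *
        ∏ j : Fin k, Matrix.trace (List.ofFn fun s : Fin (r j) => A j s).prod := by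
  obtain ⟨m, rfl⟩ : ∃ m, k = m + 1 := ⟨k - 1, (Nat.succ_pred_eq_of_pos hk).symm⟩
  set B : Fin (m + 1) → Matrix (Fin N) (Fin N) 𝕜 :=
    fun j => (List.ofFn fun s : Fin (r j) => A j s).prod with hB
  have hC : xiBdry 𝕜 N ^ bb * xiGen 𝕜 N ^ gg = ((N : 𝕜) ^ bb) • 1 := by
    rw [otft_xiBdry_eq, otft_xiGen_eq, one_pow, mul_one, smul_pow, one_pow]
  rw [otftAmplitude, hC]
  rw [← Equiv.sum_comp (Fin.consEquiv fun _ : Fin (m+1) => Fin N × Fin N),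
    Fintype.sum_prod_type, Finset.sum_comm]
  simp only [Fin.consEquiv_apply, Fin.cons_zero, Fin.cons_succ, List.ofFn_succ,
    List.reverse_cons, List.prod_append, List.prod_cons, List.prod_nil, mul_one, one_mul,
    mul_assoc]
  have step : ∀ i' : Fin m → Fin N × Fin N,
      ∑ i0 : Fin N × Fin N,
        Matrix.trace ((List.ofFn fun j => matX 𝕜 N (i' j)).reverse.prod * matX 𝕜 N i0) *
          Matrix.trace ((((N : 𝕜) ^ bb) • (1 : Matrix (Fin N) (Fin N) 𝕜)) *
            (matY 𝕜 N i0 * (B 0 *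
              (List.ofFn fun j : Fin m => matY 𝕜 N (i' j) * B j.succ).prod)))
      = Matrix.trace ((((N : 𝕜) ^ bb) • (1 : Matrix (Fin N) (Fin N) 𝕜)) *
          ((List.ofFn fun j => matX 𝕜 N (i' j)).reverse.prod * (B 0 *
            (List.ofFn fun j : Fin m => matY 𝕜 N (i' j) * B j.succ).prod))) :=
    fun i' => otft_L1 𝕜 N _ _ _
  rw [Finset.sum_congr rfl fun i' _ => step i']
  have peel := otft_peel 𝕜 N m (((N : 𝕜) ^ bb) • (1 : Matrix (Fin N) (Fin N) 𝕜)) B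
  simp only [mul_assoc] at peel
  rw [peel]
  rw [Fin.prod_univ_castSucc (fun j : Fin (m+1) => Matrix.trace (B j))]
  simp [Matrix.smul_mul, Matrix.trace_smul, smul_eq_mul]
  ring
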